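/- Let A be symmetric positive definite with smallest eigenvalue α_n = m and largest eigenvalue α_1 = M, κ = M/m, and let e₁, e_n be corresponding unit eigenvectors. Then the point x = √(α_n/(α_1+α_n))·e₁ + √(α_1/(α_1+α_n))·e_n satisfies cos(θ(Ax, x)) = 2/(√κ + 1/√κ). -/

import Mathlib

open scoped InnerProductSpace

set_option maxHeartbeats 1000000

theorem stmt_14 {n : ℕ} (A : EuclideanSpace ℝ (Fin n) →ₗ[ℝ] EuclideanSpace ℝ (Fin n))
    (m M : ℝ) (hm : 0 < m) (hmM : m ≤ M)
    (hsym : ∀ u v, ⟪A u, v⟫_ℝ = ⟪u, A v⟫_ℝ)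
    (e1 en : EuclideanSpace ℝ (Fin n)) (he1 : ‖e1‖ = 1) (hen : ‖en‖ = 1)
    (horth : ⟪e1, en⟫_ℝ = 0)
    (hAe1 : A e1 = M • e1) (hAen : A en = m • en) :
    let x := Real.sqrt (m / (M + m)) • e1 + Real.sqrt (M / (M + m)) • en
    ⟪A x, x⟫_ℝ / (‖x‖ * ‖A x‖) = 2 / (Real.sqrt (M / m) + 1 / Real.sqrt (M / m)) := by
  intro x
  have hM : (0:ℝ) < M := lt_of_lt_of_le hm hmM
  have hMm : (0:ℝ) < M + m := by linarith
  set a := Real.sqrt (m / (M + m)) with ha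
  set b := Real.sqrt (M / (M + m)) with hb
  have ha2 : a * a = m / (M + m) := Real.mul_self_sqrt (by positivity)
  have hb2 : b * b = M / (M + m) := Real.mul_self_sqrt (by positivity)
  have he11 : ⟪e1, e1⟫_ℝ = 1 := by
    rw [real_inner_self_eq_norm_sq, he1]; norm_num
  have henn : ⟪en, en⟫_ℝ = 1 := by
    rw [real_inner_self_eq_norm_sq, hen]; norm_num
  have horth' : ⟪en, e1⟫_ℝ = 0 := by rw [real_inner_comm]; exact horth
  have hAx : A x = (a * M) • e1 + (b * m) • en := by
    simp only [x, map_add, map_smul, hAe1, hAen, smul_smul]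
    rfl
  have hinner : ∀ c d c' d' : ℝ,
      ⟪c • e1 + d • en, c' • e1 + d' • en⟫_ℝ = c * c' + d * d' := by
    intro c d c' d'
    simp only [inner_add_left, inner_add_right, real_inner_smul_left,
      real_inner_smul_right, he11, henn, horth, horth']
    ring
  have h1 : ⟪A x, x⟫_ℝ = 2 * m * M / (M + m) := by
    rw [hAx, hinner]
    have : a * M * a + b * m * b = (a * a) * M + (b * b) * m := by ring
    rw [this, ha2, hb2]
    field_simp
    ring
  have hxnorm : ‖x‖ = 1 := by
    have : ⟪x, x⟫_ℝ = 1 := by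
      rw [show x = a • e1 + b • en from rfl, hinner, ha2, hb2]
      field_simp
      ring
    have := real_inner_self_eq_norm_sq x ▸ this
    nlinarith [norm_nonneg x]
  have hAxnorm : ‖A x‖ = Real.sqrt (m * M) := by
    have h2 : ⟪A x, A x⟫_ℝ = m * M := by
      rw [hAx, hinner]
      have : a * M * (a * M) + b * m * (b * m) = (a*a) * M^2 + (b*b) * m^2 := by ring
      rw [this, ha2, hb2]
      field_simp
    have h3 : ‖A x‖ ^ 2 = m * M := by
      rw [← real_inner_self_eq_norm_sq]; exact h2
    rw [← h3, Real.sqrt_sq (norm_nonneg _)]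
  rw [h1, hxnorm, hAxnorm]
  have hsm : Real.sqrt m > 0 := Real.sqrt_pos.2 hm
  have hsM : Real.sqrt M > 0 := Real.sqrt_pos.2 hM
  have hmm : Real.sqrt m * Real.sqrt m = m := Real.mul_self_sqrt hm.le
  have hMM : Real.sqrt M * Real.sqrt M = M := Real.mul_self_sqrt hM.le
  have hq : Real.sqrt (M / m) = Real.sqrt M / Real.sqrt m := Real.sqrt_div hM.le m
  have hmM2 : Real.sqrt (m * M) = Real.sqrt m * Real.sqrt M := Real.sqrt_mul hm.le M
  have key : Real.sqrt M / Real.sqrt m + Real.sqrt m / Real.sqrt M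
      = (M + m) / (Real.sqrt m * Real.sqrt M) := by
    rw [div_add_div _ _ (ne_of_gt hsm) (ne_of_gt hsM), hMM, hmm]
  rw [hq, hmM2, one_div_div, key, one_mul]
  have this1 : Real.sqrt m * Real.sqrt M * (Real.sqrt m * Real.sqrt M) = m * M := by
    rw [show Real.sqrt m * Real.sqrt M * (Real.sqrt m * Real.sqrt M)
      = (Real.sqrt m * Real.sqrt m) * (Real.sqrt M * Real.sqrt M) by ring, hmm, hMM]
  have L : 2 * m * M / (M + m) / (Real.sqrt m * Real.sqrt M)
      = 2 * (Real.sqrt m * Real.sqrt M) / (M + m) := by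
    rw [div_div, div_eq_div_iff (by positivity) (by positivity)]
    linear_combination (-2) * (M + m) * this1
  rw [L, div_div_eq_mul_div]
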